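/- Let A ∈ R^{d×m} and B ∈ R^{d×m'} be column orthonormal matrices and η ≥ 0 satisfy Aᵀ B Bᵀ A ⪰ (1 − η)·I. Then there exists a matrix Q ∈ R^{m'×m} with ‖Q‖₂ ≤ 1 such that ‖A − BQ‖₂ ≤ √η; in fact Q = Bᵀ A works. -/

import Mathlib

open Matrix

/-- the spectral norm (ℓ₂ operator norm) of a real matrix -/
noncomputable def specNorm {m n : ℕ} (A : Matrix (Fin m) (Fin n) ℝ) : ℝ :=
  ‖LinearMap.toContinuousLinearMap (Matrix.toEuclideanLin A)‖

lemma specNorm_le_of_psd {p q : ℕ} (M : Matrix (Fin p) (Fin q) ℝ) (c : ℝ) (hc : 0 ≤ c)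
    (h : (c • (1 : Matrix (Fin q) (Fin q) ℝ) - Mᵀ * M).PosSemidef) :
    specNorm M ≤ Real.sqrt c := by
  apply ContinuousLinearMap.opNorm_le_bound _ (Real.sqrt_nonneg c)
  intro x
  set v : Fin q → ℝ := WithLp.equiv 2 (Fin q → ℝ) x with hv
  have h2 := h.dotProduct_mulVec_nonneg v
  rw [star_trivial] at h2
  have hMx : ‖(LinearMap.toContinuousLinearMap (Matrix.toEuclideanLin M)) x‖ ^ 2
      = (M *ᵥ v) ⬝ᵥ (M *ᵥ v) := by
    rw [← real_inner_self_eq_norm_sq, EuclideanSpace.inner_eq_star_dotProduct]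
    simp [dotProduct, mul_comm]
    rfl
  have hx : ‖x‖ ^ 2 = v ⬝ᵥ v := by
    rw [← real_inner_self_eq_norm_sq, EuclideanSpace.inner_eq_star_dotProduct]
    simp [dotProduct, mul_comm]
    rfl
  have hrw : v ⬝ᵥ ((c • (1 : Matrix (Fin q) (Fin q) ℝ) - Mᵀ * M) *ᵥ v)
      = c * (v ⬝ᵥ v) - (M *ᵥ v) ⬝ᵥ (M *ᵥ v) := by
    rw [sub_mulVec, dotProduct_sub, ← mulVec_mulVec, dotProduct_mulVec v Mᵀ,
      vecMul_transpose, smul_mulVec, one_mulVec, dotProduct_smul, smul_eq_mul]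
  rw [hrw] at h2
  have hsq : ‖(LinearMap.toContinuousLinearMap (Matrix.toEuclideanLin M)) x‖ ^ 2
      ≤ (Real.sqrt c * ‖x‖) ^ 2 := by
    rw [hMx, mul_pow, Real.sq_sqrt hc, hx]; linarith
  exact (pow_le_pow_iff_left₀ (norm_nonneg _) (by positivity) two_ne_zero).mp hsq

lemma psd_transpose_mul_self {p q : ℕ} (C : Matrix (Fin p) (Fin q) ℝ) :
    (Cᵀ * C).PosSemidef := by
  rw [← conjTranspose_eq_transpose_of_trivial]
  exact posSemidef_conjTranspose_mul_self C

/-- If `A, B` are column orthonormal and `AᵀBBᵀA ⪰ (1−η)·I`, then there is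
`Q` with `‖Q‖₂ ≤ 1` and `‖A − BQ‖₂ ≤ √η`; indeed `Q = BᵀA` works. -/
theorem exists_contraction_close {d m m' : ℕ}
    (A : Matrix (Fin d) (Fin m) ℝ) (B : Matrix (Fin d) (Fin m') ℝ)
    (hA : Aᵀ * A = 1) (hB : Bᵀ * B = 1)
    (η : ℝ) (hη : 0 ≤ η)
    (h : (Aᵀ * B * Bᵀ * A - (1 - η) • (1 : Matrix (Fin m) (Fin m) ℝ)).PosSemidef) :
    ∃ Q : Matrix (Fin m') (Fin m) ℝ,
      specNorm Q ≤ 1 ∧ specNorm (A - B * Q) ≤ Real.sqrt η ∧ Q = Bᵀ * A := by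
  refine ⟨Bᵀ * A, ?_, ?_, rfl⟩
  · have hB' : ∀ {k : ℕ} (X : Matrix (Fin m') (Fin k) ℝ), Bᵀ * (B * X) = X := by
      intro k X; rw [← Matrix.mul_assoc, hB, Matrix.one_mul]
    have key : ((1 : ℝ) • (1 : Matrix (Fin m) (Fin m) ℝ) - (Bᵀ * A)ᵀ * (Bᵀ * A))
        = ((1 - B * Bᵀ) * A)ᵀ * ((1 - B * Bᵀ) * A) := by
      simp only [transpose_sub, transpose_mul, transpose_one, transpose_transpose,
        Matrix.sub_mul, Matrix.mul_sub, Matrix.one_mul, Matrix.mul_one,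
        Matrix.mul_assoc, hB', hA, one_smul]
      abel
    have := psd_transpose_mul_self ((1 - B * Bᵀ) * A)
    rw [← key] at this
    simpa using specNorm_le_of_psd (Bᵀ * A) 1 zero_le_one this
  · have hB' : ∀ {k : ℕ} (X : Matrix (Fin m') (Fin k) ℝ), Bᵀ * (B * X) = X := by
      intro k X; rw [← Matrix.mul_assoc, hB, Matrix.one_mul]
    apply specNorm_le_of_psd _ _ hη
    have key : (η • (1 : Matrix (Fin m) (Fin m) ℝ)
          - (A - B * (Bᵀ * A))ᵀ * (A - B * (Bᵀ * A)))
        = Aᵀ * B * Bᵀ * A - (1 - η) • (1 : Matrix (Fin m) (Fin m) ℝ) := by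
      simp only [transpose_sub, transpose_mul, Matrix.sub_mul, Matrix.mul_sub,
        Matrix.mul_assoc, hB', hA, sub_smul, one_smul]
      abel
    rw [key]; exact h
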